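/- Let ρ ≥ 2 and let S be a symmetric ρ×ρ integer matrix with det S ≠ 0. Then there exists a vector x ∈ ℕ^ρ (all entries non-negative integers) such that xᵀSx is not the square of an integer. -/

import Mathlib

set_option maxHeartbeats 1000000

open Matrix


/-- If `a t² + b t + c` is a perfect square for every natural `t`, then `b² = 4ac`. -/
theorem sq_quad_discrim (a b c : ℤ) (h : ∀ t : ℕ, IsSquare (a * (t : ℤ) ^ 2 + b * t + c)) :
    b ^ 2 = 4 * a * c := by
  have hex : ∀ t : ℕ, ∃ r : ℤ, 0 ≤ r ∧ r ^ 2 = a * t ^ 2 + b * t + c := by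
    intro t
    obtain ⟨r, hr⟩ := h t
    exact ⟨|r|, abs_nonneg r, by rw [sq_abs, hr]; ring⟩
  choose s hs0 hs2 using hex
  rcases lt_trichotomy a 0 with ha | ha | ha
  · -- a < 0 : the value is negative for large t
    exfalso
    set t : ℕ := b.natAbs + c.natAbs + 1 with ht
    have h2 := hs2 t
    have h0 := hs0 t
    have htZ : (t : ℤ) = |b| + |c| + 1 := by
      rw [ht]; push_cast [Int.natCast_natAbs]; ring
    have ha' : a ≤ -1 := by omega
    nlinarith [sq_nonneg (s t), le_abs_self b, le_abs_self c, abs_nonneg b, abs_nonneg c]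
  · -- a = 0
    have hb : b = 0 := by
      by_contra hb
      rcases lt_or_gt_of_ne hb with hbneg | hbpos
      · -- b < 0
        set t : ℕ := c.natAbs + 1 with ht
        have h2 := hs2 t
        have h0 := hs0 t
        have htZ : (t : ℤ) = |c| + 1 := by
          rw [ht]; push_cast [Int.natCast_natAbs]; ring
        have hb' : b ≤ -1 := by omega
        nlinarith [sq_nonneg (s t), le_abs_self c, abs_nonneg c]
      · -- b > 0 : squares in arithmetic progression
        have hb1 : 1 ≤ b := hbpos
        set t : ℕ := (b + |c|).toNat with ht
        have htZ : (t : ℤ) = b + |c| := by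
          rw [ht]; exact Int.toNat_of_nonneg (by positivity)
        have h2 := hs2 t
        have h0 := hs0 t
        have h2' := hs2 (t + 1)
        have h0' := hs0 (t + 1)
        have hc1 : ((t + 1 : ℕ) : ℤ) = (t : ℤ) + 1 := by push_cast; ring
        rw [hc1] at h2'
        rw [ha] at h2 h2'
        have hst : b ≤ s t := by
          by_contra h'
          push_neg at h'
          have h'' : s t ≤ b - 1 := by omega
          nlinarith [le_abs_self c, neg_abs_le c, abs_nonneg c,
            mul_nonneg (by linarith : (0:ℤ) ≤ b - 1 - s t) (by linarith : (0:ℤ) ≤ b - 1 + s t)]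
        have hlt : s t < s (t + 1) := by
          by_contra h'
          push_neg at h'
          have : s (t + 1) ^ 2 ≤ s t ^ 2 := by nlinarith
          nlinarith
        have hstep : s t + 1 ≤ s (t + 1) := hlt
        nlinarith [mul_le_mul hstep hstep (by linarith) (by linarith)]
    rw [ha, hb]; ring
  · -- a > 0 : the hard case
    have ha1 : (1 : ℤ) ≤ a := ha
    have haR : (0 : ℝ) < (a : ℝ) := by exact_mod_cast ha
    set α : ℝ := Real.sqrt (a : ℝ) with hαdef
    have hαsq : α ^ 2 = (a : ℝ) := Real.sq_sqrt haR.le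
    have hαpos : 0 < α := Real.sqrt_pos.mpr haR
    set B : ℝ := |(b : ℝ)| + |(c : ℝ)| with hBdef
    have hB0 : 0 ≤ B := by positivity
    set C : ℝ := B / α with hCdef
    have hC0 : 0 ≤ C := by positivity
    have hCα : α * C = B := by
      rw [hCdef]; field_simp
    -- Step A : |s t - α t| ≤ C for t ≥ 1
    have stepA : ∀ t : ℕ, 1 ≤ t → α * t - C ≤ (s t : ℝ) ∧ (s t : ℝ) ≤ α * t + C := by
      intro t htn
      have htR : (1 : ℝ) ≤ (t : ℕ) := by exact_mod_cast htn
      have hsR : ((s t : ℝ)) ^ 2 = (a : ℝ) * t ^ 2 + b * t + c := by exact_mod_cast hs2 t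
      have hs0R : (0 : ℝ) ≤ (s t : ℝ) := by exact_mod_cast hs0 t
      have habs1 : (b : ℝ) * t + c ≤ B * t := by
        have h1 : (b : ℝ) * t ≤ |(b : ℝ)| * t := by
          have := le_abs_self (b : ℝ); nlinarith
        have h2 : (c : ℝ) ≤ |(c : ℝ)| * t := by
          have := le_abs_self (c : ℝ)
          nlinarith [abs_nonneg (c : ℝ)]
        rw [hBdef]; nlinarith
      have habs2 : -(B * t) ≤ (b : ℝ) * t + c := by
        have h1 : -(|(b : ℝ)| * t) ≤ (b : ℝ) * t := by
          have := neg_abs_le (b : ℝ); nlinarith [abs_nonneg (b:ℝ)]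
        have h2 : -(|(c : ℝ)| * t) ≤ (c : ℝ) := by
          have := neg_abs_le (c : ℝ)
          nlinarith [abs_nonneg (c : ℝ)]
        rw [hBdef]; nlinarith
      constructor
      · by_cases hcase : α * t ≤ C
        · linarith
        · push_neg at hcase
          have hCC : C * C ≤ C * (α * t) := by
            exact mul_le_mul_of_nonneg_left hcase.le hC0
          have hCB : C * (α * t) = B * t := by
            rw [← hCα]; ring
          have key2 : (α * t - C) ^ 2 ≤ ((s t : ℝ)) ^ 2 := by
            have hexp : (α * t - C) ^ 2 = (a : ℝ) * t ^ 2 - 2 * (B * t) + C * C := by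
              have : (α * t - C) ^ 2 = α ^ 2 * t ^ 2 - 2 * ((α * C) * t) + C * C := by ring
              rw [this, hαsq, hCα]
            rw [hexp, hsR]
            nlinarith
          nlinarith [key2, hs0R]
      · have key1 : ((s t : ℝ)) ^ 2 ≤ (α * t + C) ^ 2 := by
          have hexp : (α * t + C) ^ 2 = (a : ℝ) * t ^ 2 + 2 * (B * t) + C * C := by
            have : (α * t + C) ^ 2 = α ^ 2 * t ^ 2 + 2 * ((α * C) * t) + C * C := by ring
            rw [this, hαsq, hCα]
          rw [hexp, hsR]
          nlinarith [mul_nonneg hC0 hC0, mul_nonneg hB0 (by linarith : (0:ℝ) ≤ (t:ℝ))]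
        nlinarith [key1, hs0R, mul_pos hαpos (by linarith : (0:ℝ) < (t:ℝ)), hC0]
    -- difference and sum sequences
    set d : ℕ → ℤ := fun t => s (t + 1) - s t with hd_def
    set σ : ℕ → ℤ := fun t => s t + s (t + 1) with hσ_def
    have hdσ : ∀ t : ℕ, d t * σ t = 2 * a * t + a + b := by
      intro t
      have h2 := hs2 t
      have h2' := hs2 (t + 1)
      have hc1 : ((t + 1 : ℕ) : ℤ) = (t : ℤ) + 1 := by push_cast; ring
      rw [hc1] at h2'
      simp only [hd_def, hσ_def]
      linear_combination h2' - h2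
    set M : ℝ := |(b : ℝ)| + 2 * B with hMdef
    have hM0 : 0 ≤ M := by positivity
    -- choose the threshold T
    obtain ⟨T₀, hT₀⟩ := exists_nat_ge ((2 * C + 2 * M + 1) / (2 * α))
    set T : ℕ := T₀ + 1 with hTdef
    have hT1 : 1 ≤ T := by omega
    have hTbig : 2 * M < α * (2 * T + 1) - 2 * C := by
      rw [div_le_iff₀ (by positivity : (0:ℝ) < 2 * α)] at hT₀
      have hTR : (T₀ : ℝ) ≤ (T : ℝ) := by
        rw [hTdef]; push_cast; linarith
      nlinarith [hαpos]
    -- d is within 1/2 of α for t ≥ T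
    have hd_close : ∀ t : ℕ, T ≤ t →
        -(1/2 : ℝ) < (d t : ℝ) - α ∧ (d t : ℝ) - α < 1/2 := by
      intro t htT
      have ht1 : 1 ≤ t := le_trans hT1 htT
      obtain ⟨hl, hu⟩ := stepA t ht1
      obtain ⟨hl', hu'⟩ := stepA (t + 1) (by omega)
      have hc1 : ((t + 1 : ℕ) : ℝ) = (t : ℝ) + 1 := by push_cast; ring
      rw [hc1] at hl' hu'
      have hσR : (σ t : ℝ) = (s t : ℝ) + (s (t + 1) : ℝ) := by
        simp only [hσ_def]; push_cast; ring
      have hσlow : α * (2 * t + 1) - 2 * C ≤ (σ t : ℝ) := by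
        rw [hσR]; nlinarith
      have hσup : (σ t : ℝ) ≤ α * (2 * t + 1) + 2 * C := by
        rw [hσR]; nlinarith
      have htTR : (T : ℝ) ≤ (t : ℝ) := by exact_mod_cast htT
      have hmono : α * (2 * T + 1) ≤ α * (2 * t + 1) := by
        nlinarith [hαpos.le, mul_nonneg hαpos.le (by linarith : (0:ℝ) ≤ (t:ℝ) - T)]
      have hσ2M : 2 * M < (σ t : ℝ) := by linarith
      have hσpos : (0 : ℝ) < (σ t : ℝ) := by linarith
      have hprod : (d t : ℝ) * (σ t : ℝ) = 2 * a * t + a + b := by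
        exact_mod_cast hdσ t
      -- bounds on α * σ t
      have hmul_low := mul_le_mul_of_nonneg_left hσlow hαpos.le
      have hmul_up := mul_le_mul_of_nonneg_left hσup hαpos.le
      have hexp1 : α * (α * (2 * (t:ℝ) + 1) - 2 * C) = (a:ℝ) * (2 * t + 1) - 2 * B := by
        have : α * (α * (2 * (t:ℝ) + 1) - 2 * C) = α ^ 2 * (2 * t + 1) - 2 * (α * C) := by ring
        rw [this, hαsq, hCα]
      have hexp2 : α * (α * (2 * (t:ℝ) + 1) + 2 * C) = (a:ℝ) * (2 * t + 1) + 2 * B := by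
        have : α * (α * (2 * (t:ℝ) + 1) + 2 * C) = α ^ 2 * (2 * t + 1) + 2 * (α * C) := by ring
        rw [this, hαsq, hCα]
      rw [hexp1] at hmul_low
      rw [hexp2] at hmul_up
      -- (d t - α) * σ t ∈ [-M, M]
      have hbb : (b : ℝ) ≤ |(b : ℝ)| := le_abs_self _
      have hbb' : -|(b : ℝ)| ≤ (b : ℝ) := neg_abs_le _
      have hup2 : ((d t : ℝ) - α) * (σ t : ℝ) ≤ M := by
        have : ((d t : ℝ) - α) * (σ t : ℝ) = (d t : ℝ) * σ t - α * σ t := by ring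
        rw [this, hprod, hMdef]; linarith
      have hlow2 : -M ≤ ((d t : ℝ) - α) * (σ t : ℝ) := by
        have : ((d t : ℝ) - α) * (σ t : ℝ) = (d t : ℝ) * σ t - α * σ t := by ring
        rw [this, hprod, hMdef]; linarith
      constructor
      · nlinarith [hσpos, hσ2M, hlow2]
      · nlinarith [hσpos, hσ2M, hup2]
    -- d is eventually constant
    have hd_const : ∀ t : ℕ, T ≤ t → d t = d T := by
      intro t htT
      induction t, htT using Nat.le_induction with
      | base => rfl
      | succ t htT ih =>
        obtain ⟨h1, h2⟩ := hd_close t htT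
        obtain ⟨h3, h4⟩ := hd_close (t + 1) (by omega)
        have habs : |((d (t + 1) - d t : ℤ) : ℝ)| < 1 := by
          push_cast
          rw [abs_lt]
          constructor <;> linarith
        have h5 : d (t + 1) < d t + 1 := by
          have : ((d (t + 1) : ℤ) : ℝ) < ((d t + 1 : ℤ) : ℝ) := by push_cast; linarith
          exact_mod_cast this
        have h6 : d t - 1 < d (t + 1) := by
          have : ((d t - 1 : ℤ) : ℝ) < ((d (t + 1) : ℤ) : ℝ) := by push_cast; linarith
          exact_mod_cast this
        have hdd : d (t + 1) = d t := by omega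
        rw [hdd, ih]
    set e : ℤ := d T with he_def
    set m : ℤ := s T - e * T with hm_def
    have hlin : ∀ t : ℕ, T ≤ t → s t = e * t + m := by
      intro t htT
      induction t, htT using Nat.le_induction with
      | base => rw [hm_def]; ring
      | succ t htT ih =>
        have hdt : d t = e := hd_const t htT
        have : s (t + 1) = s t + d t := by simp only [hd_def]; ring
        rw [this, ih, hdt]
        push_cast
        ring
    have hc1 : ((T + 1 : ℕ) : ℤ) = (T : ℤ) + 1 := by push_cast; ring
    have hc2 : ((T + 2 : ℕ) : ℤ) = (T : ℤ) + 2 := by push_cast; ring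
    have E0 : (e * T + m) ^ 2 = a * (T:ℤ) ^ 2 + b * T + c := by
      have := hs2 T; rw [hlin T le_rfl] at this; exact this
    have E1 : (e * ((T:ℤ) + 1) + m) ^ 2 = a * ((T:ℤ) + 1) ^ 2 + b * ((T:ℤ) + 1) + c := by
      have := hs2 (T + 1); rw [hlin (T + 1) (by omega)] at this
      rw [hc1] at this; exact this
    have E2 : (e * ((T:ℤ) + 2) + m) ^ 2 = a * ((T:ℤ) + 2) ^ 2 + b * ((T:ℤ) + 2) + c := by
      have := hs2 (T + 2); rw [hlin (T + 2) (by omega)] at this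
      rw [hc2] at this; exact this
    have ha2 : 2 * e ^ 2 = 2 * a := by linear_combination E2 - 2 * E1 + E0
    have hae : e ^ 2 = a := by linarith
    have hbe : b = 2 * e * m := by linear_combination E0 - E1 + (2 * (T:ℤ) + 1) * hae
    have hce : c = m ^ 2 := by linear_combination -E0 + (T:ℤ) ^ 2 * hae - (T:ℤ) * hbe
    rw [hbe, hce, ← hae]; ring


/-- from Lemma 4.1 of the paper: a nondegenerate symmetric integer quadratic form
in `ρ ≥ 2` variables takes some value at a tuple of non-negative integers that is not a perfect
square. -/
theorem exists_nonsquare_value (ρ : ℕ) (hρ : 2 ≤ ρ)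
    (S : Matrix (Fin ρ) (Fin ρ) ℤ) (hS : S.IsSymm) (hdet : S.det ≠ 0) :
    ∃ x : Fin ρ → ℕ,
      ¬ IsSquare ((fun i => (x i : ℤ)) ⬝ᵥ (S *ᵥ fun i => (x i : ℤ))) := by
  by_contra hcon
  push_neg at hcon
  classical
  have hne : Nonempty (Fin ρ) := ⟨⟨0, by omega⟩⟩
  -- symmetry of the bilinear form
  have hsymm : ∀ x y : Fin ρ → ℤ, x ⬝ᵥ (S *ᵥ y) = y ⬝ᵥ (S *ᵥ x) := by
    intro x y
    rw [dotProduct_mulVec, ← mulVec_transpose, hS.eq, dotProduct_comm]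
  -- expansion of the quadratic form along a line
  have hexpand : ∀ (t : ℤ) (x y : Fin ρ → ℤ),
      (t • x + y) ⬝ᵥ (S *ᵥ (t • x + y))
        = (x ⬝ᵥ (S *ᵥ x)) * t ^ 2 + (2 * (x ⬝ᵥ (S *ᵥ y))) * t + (y ⬝ᵥ (S *ᵥ y)) := by
    intro t x y
    rw [mulVec_add, mulVec_smul]
    simp only [dotProduct_add, add_dotProduct, dotProduct_smul, smul_dotProduct,
      smul_eq_mul]
    rw [hsymm y x]
    ring
  -- cast of a combination
  have hcast : ∀ (t : ℕ) (v w : Fin ρ → ℕ),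
      (fun i => ((t * v i + w i : ℕ) : ℤ))
        = (t : ℤ) • (fun i => (v i : ℤ)) + (fun i => (w i : ℤ)) := by
    intro t v w
    funext i
    simp only [Pi.add_apply, Pi.smul_apply, smul_eq_mul]
    push_cast
    ring
  -- the key Cauchy–Schwarz equality
  have key : ∀ v w : Fin ρ → ℕ,
      ((fun i => (v i : ℤ)) ⬝ᵥ (S *ᵥ fun i => (w i : ℤ))) ^ 2
        = ((fun i => (v i : ℤ)) ⬝ᵥ (S *ᵥ fun i => (v i : ℤ)))
          * ((fun i => (w i : ℤ)) ⬝ᵥ (S *ᵥ fun i => (w i : ℤ))) := by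
    intro v w
    have hsq : ∀ t : ℕ,
        IsSquare (((fun i => (v i : ℤ)) ⬝ᵥ (S *ᵥ fun i => (v i : ℤ))) * (t : ℤ) ^ 2
          + (2 * ((fun i => (v i : ℤ)) ⬝ᵥ (S *ᵥ fun i => (w i : ℤ)))) * (t : ℤ)
          + ((fun i => (w i : ℤ)) ⬝ᵥ (S *ᵥ fun i => (w i : ℤ)))) := by
      intro t
      have h1 := hcon (fun i => t * v i + w i)
      rw [hcast t v w, hexpand] at h1
      exact h1
    have h4 := sq_quad_discrim _ _ _ hsq
    nlinarith [h4]
  -- computations with basis vectors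
  have hcs : ∀ i : Fin ρ,
      (fun k => ((Pi.single i 1 : Fin ρ → ℕ) k : ℤ)) = Pi.single i (1 : ℤ) := by
    intro i
    funext k
    by_cases h : k = i <;> simp [Pi.single_apply, h]
  have hcs2 : ∀ i j : Fin ρ,
      (fun k => ((Pi.single i 1 + Pi.single j 1 : Fin ρ → ℕ) k : ℤ))
        = Pi.single i (1 : ℤ) + Pi.single j (1 : ℤ) := by
    intro i j
    funext k
    simp only [Pi.add_apply, Pi.single_apply]
    by_cases h : k = i <;> by_cases h' : k = j <;> simp [h, h']
  have hQs : ∀ i : Fin ρ,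
      (Pi.single i (1 : ℤ)) ⬝ᵥ (S *ᵥ Pi.single i (1 : ℤ)) = S i i := by
    intro i
    rw [mulVec_single, single_dotProduct]
    simp
  have hBs : ∀ (i : Fin ρ) (x : Fin ρ → ℤ),
      (Pi.single i (1 : ℤ)) ⬝ᵥ (S *ᵥ x) = (S *ᵥ x) i := by
    intro i x
    rw [single_dotProduct, one_mul]
  have hQsum : ∀ i j : Fin ρ,
      (Pi.single i (1 : ℤ) + Pi.single j (1 : ℤ)) ⬝ᵥ
          (S *ᵥ (Pi.single i (1 : ℤ) + Pi.single j (1 : ℤ)))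
        = S i i + S i j + S j i + S j j := by
    intro i j
    rw [mulVec_add, mulVec_single_one, mulVec_single_one]
    simp only [add_dotProduct, dotProduct_add, single_dotProduct, one_mul, mul_one, col_apply]
    ring
  by_cases hz : ∀ v : Fin ρ → ℕ,
      ((fun i => (v i : ℤ)) ⬝ᵥ (S *ᵥ fun i => (v i : ℤ))) = 0
  · -- the form vanishes identically, so S = 0
    have hS0 : S = 0 := by
      ext i j
      have hdi := hz (Pi.single i 1)
      rw [hcs i, hQs i] at hdi
      have hdj := hz (Pi.single j 1)
      rw [hcs j, hQs j] at hdj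
      have hij := hz (Pi.single i 1 + Pi.single j 1)
      rw [hcs2 i j, hQsum i j] at hij
      have hsij : S i j = S j i := hS.apply j i
      simp only [Matrix.zero_apply]
      linarith
    exact hdet (by rw [hS0]; exact det_zero)
  · push_neg at hz
    obtain ⟨v0, hv0⟩ := hz
    set q : ℤ := (fun i => (v0 i : ℤ)) ⬝ᵥ (S *ᵥ fun i => (v0 i : ℤ)) with hq_def
    set u : Fin ρ → ℤ := S *ᵥ (fun i => (v0 i : ℤ)) with hu_def
    have hui : ∀ i : Fin ρ, (u i) ^ 2 = S i i * q := by
      intro i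
      have h1 := key (Pi.single i 1) v0
      rw [hcs i, hQs i, hBs i] at h1
      exact h1
    have huij : ∀ i j : Fin ρ, (u i + u j) ^ 2 = (S i i + S i j + S j i + S j j) * q := by
      intro i j
      have h1 := key (Pi.single i 1 + Pi.single j 1) v0
      rw [hcs2 i j, hQsum i j] at h1
      rw [add_dotProduct, hBs i, hBs j] at h1
      exact h1
    have hqS : ∀ i j : Fin ρ, q * S i j = u i * u j := by
      intro i j
      have h1 := huij i j
      have h2 := hui i
      have h3 := hui j
      have hsij : S i j = S j i := hS.apply j i
      have h4 : 2 * (q * S i j) = 2 * (u i * u j) := by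
        linear_combination q * hsij - h1 + h2 + h3
      linarith
    by_cases hu0 : u = 0
    · have hS0 : S = 0 := by
        ext i j
        have := hqS i j
        rw [hu0] at this
        simp only [Pi.zero_apply, mul_zero] at this
        rcases mul_eq_zero.mp this with h | h
        · exact absurd h hv0
        · simpa using h
      exact hdet (by rw [hS0]; exact det_zero)
    · have hk : ∃ k, u k ≠ 0 := by
        by_contra h
        push_neg at h
        exact hu0 (funext h)
      obtain ⟨k, hk⟩ := hk
      set j : Fin ρ := if k = ⟨0, by omega⟩ then ⟨1, by omega⟩ else ⟨0, by omega⟩ with hj_def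
      have hjk : j ≠ k := by
        rw [hj_def]
        split_ifs with h
        · rw [h]
          simp [Fin.ext_iff]
        · exact fun hc => h hc.symm
      set w : Fin ρ → ℤ := u k • Pi.single j (1 : ℤ) - u j • Pi.single k (1 : ℤ) with hw_def
      have hwj : w j = u k := by
        rw [hw_def]
        simp [Pi.single_eq_same, Pi.single_eq_of_ne hjk]
      have hSw : S *ᵥ w = 0 := by
        funext i
        have hmul : q * ((S *ᵥ w) i) = 0 := by
          rw [hw_def, mulVec_sub, mulVec_smul, mulVec_smul, mulVec_single_one, mulVec_single_one]
          simp only [Pi.sub_apply, Pi.smul_apply, smul_eq_mul, mul_one, col_apply]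
          have e1 := hqS i j
          have e2 := hqS i k
          linear_combination u k * e1 - u j * e2
        have := mul_eq_zero.mp hmul
        rcases this with h | h
        · exact absurd h hv0
        · simpa using h
      have := Matrix.eq_zero_of_mulVec_eq_zero hdet hSw
      rw [this] at hwj
      exact hk (by simpa using hwj.symm)
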